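/- arXiv:2511.17002 — 2 statements merged into one kernel-verified Lean document; each statement's English description precedes it below -/
import Mathlib

section
/- Assume λ > 0, τ ∈ (0,1) and ρ = Υ = ((τ+1)/(2τ))(λτ)^{1/(τ+1)}, and set ϖ2 = −(λτ)^{1/(τ+1)}. Define Φ(r) = r^{−ϖ2}(log(1/r))^{2/(1+τ)} for r ∈ (0,1). Then there exists r_* ∈ (0,1) such that for all r ∈ (0, r_*): Φ'(r) > 0 and L_{ρ,λ,τ}[Φ](r) ≤ 0. -/
open MeasureTheory Filter Topology Real RealInnerProductSpace

noncomputable section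

/-- The gradient factor `G_τ(x,z,ξ) = z^τ ‖ξ‖^(1-τ) / ‖x‖^(τ+1)`.
For `τ = 0` this equals `‖ξ‖ / ‖x‖`, since `z ^ (0:ℝ) = 1` for real powers. -/
def Gt {N : ℕ} (τ : ℝ) (x : EuclideanSpace ℝ (Fin N)) (z : ℝ)
    (ξ : EuclideanSpace ℝ (Fin N)) : ℝ :=
  z ^ τ * ‖ξ‖ ^ (1 - τ) / ‖x‖ ^ (τ + 1)

/-- Test functions: `C¹` functions with compact support contained in `Ω \ {0}`. -/
def IsTestFun {N : ℕ} (Ω : Set (EuclideanSpace ℝ (Fin N)))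
    (φ : EuclideanSpace ℝ (Fin N) → ℝ) : Prop :=
  ContDiff ℝ 1 φ ∧ HasCompactSupport φ ∧ tsupport φ ⊆ Ω \ {0}

/-- The distributional pairing of equation (E) with a test function `φ`:
`∫ ∇u·∇φ + (N-2+2ρ) ∫ ((x·∇u)/|x|²) φ - λ ∫ G_τ(x,u,∇u) φ + ∫ |x|^θ u^q φ`. -/
def weakE (N : ℕ) (ρ lam τ θ q : ℝ) (Ω : Set (EuclideanSpace ℝ (Fin N)))
    (u φ : EuclideanSpace ℝ (Fin N) → ℝ) : ℝ :=
  (∫ x in Ω \ {0}, ⟪gradient u x, gradient φ x⟫)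
    + ((N : ℝ) - 2 + 2 * ρ) * (∫ x in Ω \ {0}, ⟪x, gradient u x⟫ / ‖x‖ ^ 2 * φ x)
    - lam * (∫ x in Ω \ {0}, Gt τ x (u x) (gradient u x) * φ x)
    + ∫ x in Ω \ {0}, ‖x‖ ^ θ * u x ^ q * φ x

/-- A positive `C¹` function on `Ω \ {0}`. -/
def PosC1 {N : ℕ} (Ω : Set (EuclideanSpace ℝ (Fin N)))
    (u : EuclideanSpace ℝ (Fin N) → ℝ) : Prop :=
  ContDiffOn ℝ 1 u (Ω \ {0}) ∧ ∀ x ∈ Ω \ {0}, 0 < u x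

/-- Positive distributional solution of equation (E) in `Ω \ {0}`. -/
def IsSolutionE (N : ℕ) (ρ lam τ θ q : ℝ) (Ω : Set (EuclideanSpace ℝ (Fin N)))
    (u : EuclideanSpace ℝ (Fin N) → ℝ) : Prop :=
  PosC1 Ω u ∧ ∀ φ, IsTestFun Ω φ → weakE N ρ lam τ θ q Ω u φ = 0

/-- Positive sub-solution of equation (E) in `Ω \ {0}`. -/
def IsSubSolutionE (N : ℕ) (ρ lam τ θ q : ℝ) (Ω : Set (EuclideanSpace ℝ (Fin N)))
    (u : EuclideanSpace ℝ (Fin N) → ℝ) : Prop :=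
  PosC1 Ω u ∧ ∀ φ, IsTestFun Ω φ → (∀ x, 0 ≤ φ x) → weakE N ρ lam τ θ q Ω u φ ≤ 0

/-- Positive super-solution of equation (E) in `Ω \ {0}`. -/
def IsSuperSolutionE (N : ℕ) (ρ lam τ θ q : ℝ) (Ω : Set (EuclideanSpace ℝ (Fin N)))
    (u : EuclideanSpace ℝ (Fin N) → ℝ) : Prop :=
  PosC1 Ω u ∧ ∀ φ, IsTestFun Ω φ → (∀ x, 0 ≤ φ x) → 0 ≤ weakE N ρ lam τ θ q Ω u φ

/-- `f_ρ(t) = t (t + 2ρ) + λ |t|^(1-τ)`. -/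
def fRho (ρ lam τ t : ℝ) : ℝ := t * (t + 2 * ρ) + lam * |t| ^ (1 - τ)

/-- `Υ = ((τ+1)/(2τ)) (λτ)^(1/(τ+1))`. -/
def Upsilon (lam τ : ℝ) : ℝ := ((τ + 1) / (2 * τ)) * (lam * τ) ^ (1 / (τ + 1))

/-- Case [N₀]: (a) `τ = 0` and `λ ≥ 2ρ`, or (b) `λ > 0`, `τ ∈ (0,1)` and `ρ < Υ`. -/
def CaseN0 (ρ lam τ : ℝ) : Prop :=
  (τ = 0 ∧ 2 * ρ ≤ lam) ∨ (0 < lam ∧ 0 < τ ∧ τ < 1 ∧ ρ < Upsilon lam τ)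

/-- Case [N₁]: (a) `τ = 0` and `λ < 2ρ`, or (b) `λ < 0` and `τ ∈ (0,1)`. -/
def CaseN1 (ρ lam τ : ℝ) : Prop :=
  (τ = 0 ∧ lam < 2 * ρ) ∨ (lam < 0 ∧ 0 < τ ∧ τ < 1)

/-- Case [N₂]: `λ > 0`, `τ ∈ (0,1)` and `ρ ≥ Υ`. -/
def CaseN2 (ρ lam τ : ℝ) : Prop :=
  0 < lam ∧ 0 < τ ∧ τ < 1 ∧ Upsilon lam τ ≤ ρ

/-- `w` is the smallest negative root of `f_ρ` (i.e. `w = ϖ₁`). -/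
def IsMinNegRoot (ρ lam τ w : ℝ) : Prop :=
  w < 0 ∧ fRho ρ lam τ w = 0 ∧ ∀ t, t < 0 → fRho ρ lam τ t = 0 → w ≤ t

/-- `w` is the largest negative root of `f_ρ` (i.e. `w = ϖ₂`). -/
def IsMaxNegRoot (ρ lam τ w : ℝ) : Prop :=
  w < 0 ∧ fRho ρ lam τ w = 0 ∧ ∀ t, t < 0 → fRho ρ lam τ t = 0 → t ≤ w

/-- `Φ_{ϖ₂}(r)`: equal to `r^(-ϖ₂)` if `ρ > Υ` and to `r^(-ϖ₂) |log r|^(2/(1+τ))` if `ρ = Υ`. -/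
def Phi2 (ρ lam τ w2 r : ℝ) : ℝ :=
  if ρ = Upsilon lam τ then r ^ (-w2) * |Real.log r| ^ (2 / (1 + τ)) else r ^ (-w2)

/-- `Ψ_{ϖ₁}(t)`: equal to `t^(-ϖ₁)` if `ρ > Υ` and to `t^(-ϖ₁) (log t)^(2/(1+τ))` if `ρ = Υ`. -/
def Psi1 (ρ lam τ w1 t : ℝ) : ℝ :=
  if ρ = Upsilon lam τ then t ^ (-w1) * (Real.log t) ^ (2 / (1 + τ)) else t ^ (-w1)

/-- The radial operator `L_{ρ,λ,τ}[P](r) = P'' + (1-2ρ) P'/r + λ P^τ |P'|^(1-τ)/r^(1+τ)`. -/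
def Lrad (ρ lam τ : ℝ) (P : ℝ → ℝ) (r : ℝ) : ℝ :=
  deriv (deriv P) r + (1 - 2 * ρ) * deriv P r / r
    + lam * P r ^ τ * |deriv P r| ^ (1 - τ) / r ^ (1 + τ)

/-- The Laplacian of `u` at `x`, as the trace of the second derivative. -/
def lapl {N : ℕ} (u : EuclideanSpace ℝ (Fin N) → ℝ) (x : EuclideanSpace ℝ (Fin N)) : ℝ :=
  ∑ i : Fin N, iteratedFDeriv ℝ 2 u x ![EuclideanSpace.single i 1, EuclideanSpace.single i 1]

lemma bern_deriv_nonneg {α y : ℝ} (hα0 : 0 < α) (hα1 : α < 1) (hy0 : 0 ≤ y) (hy1 : y < 1) :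
    1 + (1 - α) * y ≤ (1 - y) ^ (α - 1) := by
  have h1y : (0:ℝ) < 1 - y := by linarith
  have hb : (1 - y) ^ (1 - α) ≤ 1 - (1 - α) * y := by
    have := rpow_one_add_le_one_add_mul_self (s := -y) (by linarith) (p := 1 - α)
      (by linarith) (by linarith)
    have h2 : (1 + -y) = 1 - y := by ring
    rw [h2] at this
    linarith
  have hp : (0:ℝ) < (1 - y) ^ (1 - α) := rpow_pos_of_pos h1y _
  have hrw : (1 - y) ^ (α - 1) = ((1 - y) ^ (1 - α))⁻¹ := by
    rw [← Real.rpow_neg h1y.le]; ring_nf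
  rw [hrw, ← one_div, le_div_iff₀ hp]
  have hc : (0:ℝ) ≤ 1 + (1 - α) * y := by nlinarith
  nlinarith [mul_le_mul_of_nonneg_left hb hc, sq_nonneg ((1 - α) * y)]

lemma bern_cubic {α x : ℝ} (hα0 : 0 < α) (hα1 : α < 1) (hx0 : 0 ≤ x) (hx1 : x < 1) :
    (1 - x) ^ α ≤ 1 - α * x - α * (1 - α) / 2 * x ^ 2 := by
  rcases eq_or_lt_of_le hx0 with h | hx0'
  · simp [← h]
  set g : ℝ → ℝ := fun y => 1 - α * y - α * (1 - α) / 2 * y ^ 2 - (1 - y) ^ α with hg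
  have hderiv : ∀ y ∈ Set.Ico (0:ℝ) 1, HasDerivAt g
      (-α - α * (1 - α) * y + α * (1 - y) ^ (α - 1)) y := by
    intro y hy
    have h1y : (0:ℝ) < 1 - y := by simp at hy; linarith [hy.2]
    have h1 : HasDerivAt (fun t : ℝ => 1 - t) (-1) y := by
      simpa using (hasDerivAt_id y).const_sub 1
    have h2 : HasDerivAt (fun t : ℝ => t ^ α) (α * (1 - y) ^ (α - 1)) (1 - y) :=
      Real.hasDerivAt_rpow_const (Or.inl h1y.ne')
    have h3 : HasDerivAt (fun t : ℝ => (1 - t) ^ α) (α * (1 - y) ^ (α - 1) * (-1)) y :=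
      h2.comp y h1
    have h4 : HasDerivAt (fun t : ℝ => 1 - α * t - α * (1 - α) / 2 * t ^ 2)
        (-α - α * (1 - α) / 2 * (2 * y)) y := by
      have := ((hasDerivAt_id y).const_mul α).const_sub 1
      have h5 := ((hasDerivAt_pow 2 y).const_mul (α * (1 - α) / 2))
      exact (this.sub h5).congr_deriv (by norm_num)
    have := h4.sub h3
    refine this.congr_deriv ?_
    ring
  have hmono : MonotoneOn g (Set.Icc 0 x) := by
    apply monotoneOn_of_deriv_nonneg (convex_Icc 0 x)
    · exact ContinuousOn.sub (by fun_prop)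
        (ContinuousOn.rpow_const (by fun_prop) (fun y hy => Or.inl (by
          simp at hy ⊢; intro h; linarith [hy.2])))
    · intro y hy
      rw [interior_Icc] at hy
      exact (hderiv y ⟨hy.1.le, by linarith [hy.2]⟩).differentiableAt.differentiableWithinAt
    · intro y hy
      rw [interior_Icc] at hy
      have hy1 : y < 1 := by linarith [hy.2]
      rw [(hderiv y ⟨hy.1.le, hy1⟩).deriv]
      have := bern_deriv_nonneg hα0 hα1 hy.1.le hy1
      nlinarith [hy.1]
  have h0 : g 0 = 0 := by simp [hg]
  have := hmono (Set.left_mem_Icc.2 hx0) (Set.right_mem_Icc.2 hx0) hx0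
  rw [h0] at this
  simp only [hg] at this
  linarith

lemma hasDerivAt_rpow_mul_neglog (a b : ℝ) {s : ℝ} (hs0 : 0 < s) (hs1 : s < 1) :
    HasDerivAt (fun t : ℝ => t ^ a * (-Real.log t) ^ b)
      (s ^ (a - 1) * (-Real.log s) ^ (b - 1) * (a * (-Real.log s) - b)) s := by
  have hA : (0:ℝ) < -Real.log s := by
    have := Real.log_neg hs0 hs1; linarith
  have h1 : HasDerivAt (fun t : ℝ => t ^ a) (a * s ^ (a - 1)) s :=
    Real.hasDerivAt_rpow_const (Or.inl hs0.ne')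
  have hlog : HasDerivAt (fun t : ℝ => -Real.log t) (-s⁻¹) s :=
    (Real.hasDerivAt_log hs0.ne').neg
  have h2 : HasDerivAt (fun y : ℝ => y ^ b) (b * (-Real.log s) ^ (b - 1)) (-Real.log s) :=
    Real.hasDerivAt_rpow_const (Or.inl hA.ne')
  have h3 : HasDerivAt (fun t : ℝ => (-Real.log t) ^ b)
      (b * (-Real.log s) ^ (b - 1) * -s⁻¹) s := by
    have := h2.comp s hlog; exact this
  have h4 := h1.mul h3
  refine h4.congr_deriv ?_
  have eA : (-Real.log s) ^ b = (-Real.log s) ^ (b - 1) * (-Real.log s) := by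
    rw [← Real.rpow_add_one hA.ne']; congr 1; ring
  have es : s ^ a = s ^ (a - 1) * s := by
    rw [← Real.rpow_add_one hs0.ne']; congr 1; ring
  rw [eA, es]
  field_simp
  ring

lemma hasDerivAt_D (a b : ℝ) {s : ℝ} (hs0 : 0 < s) (hs1 : s < 1) :
    HasDerivAt (fun t : ℝ => t ^ (a - 1) * (-Real.log t) ^ (b - 1) * (a * (-Real.log t) - b))
      (s ^ (a - 2) * (-Real.log s) ^ (b - 2) *
        (a * (a - 1) * (-Real.log s) ^ 2 - b * (2 * a - 1) * (-Real.log s) + b * (b - 1))) s := by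
  have hA : (0:ℝ) < -Real.log s := by
    have := Real.log_neg hs0 hs1; linarith
  have h1 := hasDerivAt_rpow_mul_neglog (a - 1) (b - 1) hs0 hs1
  have hlog : HasDerivAt (fun t : ℝ => -Real.log t) (-s⁻¹) s :=
    (Real.hasDerivAt_log hs0.ne').neg
  have hg : HasDerivAt (fun t : ℝ => a * (-Real.log t) - b) (a * -s⁻¹) s := by
    simpa using (hlog.const_mul a).sub_const b
  have h4 := h1.mul hg
  refine h4.congr_deriv ?_
  rw [show a - 1 - 1 = a - 2 from by ring, show b - 1 - 1 = b - 2 from by ring,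
    show s ^ (a - 1) = s ^ (a - 2) * s from by rw [← Real.rpow_add_one hs0.ne']; congr 1; ring,
    show (-Real.log s) ^ (b - 1) = (-Real.log s) ^ (b - 2) * (-Real.log s) from by
      rw [← Real.rpow_add_one hA.ne']; congr 1; ring]
  field_simp
  ring

/-- For `λ > 0`, `τ ∈ (0,1)`, `ρ = Υ` and `ϖ₂ = -(λτ)^{1/(τ+1)}`, the
function `Φ(r) = r^{-ϖ₂} (log(1/r))^{2/(1+τ)}` satisfies, for some `r_* ∈ (0,1)` and all
`r ∈ (0, r_*)`: `Φ'(r) > 0` and `L_{ρ,λ,τ}[Φ](r) ≤ 0`. -/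
theorem stmt18_Phi_supersolution
    (lam τ ρ : ℝ) (hlam : 0 < lam) (hτ0 : 0 < τ) (hτ1 : τ < 1)
    (hρ : ρ = Upsilon lam τ)
    (w2 : ℝ) (hw2 : w2 = -((lam * τ) ^ (1 / (τ + 1)))) :
    ∃ rstar : ℝ, 0 < rstar ∧ rstar < 1 ∧
      ∀ r : ℝ, 0 < r → r < rstar →
        0 < deriv (fun s : ℝ => s ^ (-w2) * (Real.log (1 / s)) ^ (2 / (1 + τ))) r ∧
        Lrad ρ lam τ (fun s : ℝ => s ^ (-w2) * (Real.log (1 / s)) ^ (2 / (1 + τ))) r ≤ 0 := by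
  obtain ⟨m, hm_def⟩ : ∃ m : ℝ, m = (lam * τ) ^ (1 / (τ + 1)) := ⟨_, rfl⟩
  obtain ⟨β, hβ_def⟩ : ∃ β : ℝ, β = 2 / (1 + τ) := ⟨_, rfl⟩
  have h1τ : (0:ℝ) < 1 + τ := by linarith
  have hm : 0 < m := by rw [hm_def]; exact Real.rpow_pos_of_pos (mul_pos hlam hτ0) _
  have hβ : 0 < β := by rw [hβ_def]; positivity
  have hF : (fun s : ℝ => s ^ (-w2) * (Real.log (1 / s)) ^ (2 / (1 + τ))) =
      (fun s : ℝ => s ^ m * (-Real.log s) ^ β) := by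
    funext s
    rw [hw2, neg_neg, show Real.log (1 / s) = -Real.log s from by
      rw [one_div, Real.log_inv], ← hm_def, ← hβ_def]
  have hβm : 0 < β / m := div_pos hβ hm
  refine ⟨Real.exp (-(β / m)), Real.exp_pos _, by rw [Real.exp_lt_one_iff]; linarith, ?_⟩
  intro r hr0 hrs
  have hr1 : r < 1 := lt_trans hrs (by rw [Real.exp_lt_one_iff]; linarith)
  obtain ⟨A, hA_def⟩ : ∃ A : ℝ, A = -Real.log r := ⟨_, rfl⟩
  have hA0 : 0 < A := by
    rw [hA_def]; have := Real.log_neg hr0 hr1; linarith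
  have hmA : β < m * A := by
    have hlog : Real.log r < -(β / m) := (Real.log_lt_iff_lt_exp hr0).2 hrs
    have h2 : β / m < A := by rw [hA_def]; linarith
    calc β = β / m * m := by field_simp
      _ < A * m := by apply mul_lt_mul_of_pos_right h2 hm
      _ = m * A := by ring
  rw [hF]
  -- first derivative
  have hD' := hasDerivAt_rpow_mul_neglog m β hr0 hr1
  have hderivΦ : deriv (fun s : ℝ => s ^ m * (-Real.log s) ^ β) r
      = r ^ (m - 1) * A ^ (β - 1) * (m * A - β) := by
    rw [hD'.deriv, hA_def]
  have hpos : 0 < r ^ (m - 1) * A ^ (β - 1) * (m * A - β) := by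
    exact mul_pos (mul_pos (Real.rpow_pos_of_pos hr0 (m - 1))
      (Real.rpow_pos_of_pos hA0 (β - 1))) (by linarith)
  refine ⟨by rw [hderivΦ]; exact hpos, ?_⟩
  -- second derivative
  have hmem : Set.Ioo (0:ℝ) 1 ∈ nhds r := isOpen_Ioo.mem_nhds ⟨hr0, hr1⟩
  have hev : deriv (fun s : ℝ => s ^ m * (-Real.log s) ^ β) =ᶠ[nhds r]
      (fun t : ℝ => t ^ (m - 1) * (-Real.log t) ^ (β - 1) * (m * (-Real.log t) - β)) :=
    Filter.eventuallyEq_of_mem hmem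
      (fun t ht => (hasDerivAt_rpow_mul_neglog m β ht.1 ht.2).deriv)
  have h2nd : deriv (deriv (fun s : ℝ => s ^ m * (-Real.log s) ^ β)) r
      = r ^ (m - 2) * A ^ (β - 2) *
        (m * (m - 1) * A ^ 2 - β * (2 * m - 1) * A + β * (β - 1)) := by
    rw [hev.deriv_eq, (hasDerivAt_D m β hr0 hr1).deriv, hA_def]
  unfold Lrad
  rw [h2nd, hderivΦ]
  have hΦr : (fun s : ℝ => s ^ m * (-Real.log s) ^ β) r = r ^ m * A ^ β := by
    rw [hA_def]
  rw [hΦr, abs_of_pos hpos]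
  -- rewrite the nonlinear term
  have hrne : r ^ ((1:ℝ) + τ) ≠ 0 := (Real.rpow_pos_of_pos hr0 _).ne'
  have h1 : (r ^ m * A ^ β) ^ τ = r ^ (m * τ) * A ^ (β * τ) := by
    rw [Real.mul_rpow (by positivity) (by positivity), ← Real.rpow_mul hr0.le,
      ← Real.rpow_mul hA0.le]
  have h2 : (r ^ (m - 1) * A ^ (β - 1) * (m * A - β)) ^ (1 - τ)
      = r ^ ((m - 1) * (1 - τ)) * A ^ ((β - 1) * (1 - τ)) * (m * A - β) ^ (1 - τ) := by
    rw [Real.mul_rpow (by positivity) (by linarith),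
      Real.mul_rpow (by positivity) (by positivity),
      ← Real.rpow_mul hr0.le, ← Real.rpow_mul hA0.le]
  have hx0 : (0:ℝ) ≤ β / (m * A) := by positivity
  have hx1 : β / (m * A) < 1 := (div_lt_one (by positivity)).2 hmA
  have h3 : (m * A - β) ^ (1 - τ)
      = m ^ (1 - τ) * A ^ (1 - τ) * (1 - β / (m * A)) ^ (1 - τ) := by
    rw [← Real.mul_rpow hm.le hA0.le, ← Real.mul_rpow (by positivity) (by linarith)]
    congr 1
    field_simp
  have h4 : r ^ (m * τ) * r ^ ((m - 1) * (1 - τ)) / r ^ ((1:ℝ) + τ) = r ^ (m - 2) := by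
    rw [← Real.rpow_add hr0, ← Real.rpow_sub hr0]; congr 1; ring
  have h5 : A ^ (β * τ) * A ^ ((β - 1) * (1 - τ)) * A ^ (1 - τ) = A ^ (β - 2) * A ^ 2 := by
    rw [← Real.rpow_add hA0, ← Real.rpow_add hA0, ← Real.rpow_two, ← Real.rpow_add hA0]
    congr 1; ring
  have hT3 : lam * (r ^ m * A ^ β) ^ τ * (r ^ (m - 1) * A ^ (β - 1) * (m * A - β)) ^ (1 - τ)
        / r ^ ((1:ℝ) + τ)
      = lam * m ^ (1 - τ) *
        (r ^ (m - 2) * (A ^ (β - 2) * A ^ 2) * (1 - β / (m * A)) ^ (1 - τ)) := by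
    rw [h1, h2, h3, ← h4, ← h5]
    field_simp
  rw [hT3]
  -- rewrite T2
  have hT2 : (1 - 2 * ρ) * (r ^ (m - 1) * A ^ (β - 1) * (m * A - β)) / r
      = (1 - 2 * ρ) * (r ^ (m - 2) * (A ^ (β - 2) * A) * (m * A - β)) := by
    rw [show r ^ (m - 1) = r ^ (m - 2) * r from by
        rw [← Real.rpow_add_one hr0.ne']; congr 1; ring,
      show A ^ (β - 1) = A ^ (β - 2) * A from by
        rw [← Real.rpow_add_one hA0.ne']; congr 1; ring]
    field_simp
  rw [hT2]
  -- bound the nonlinear term with the cubic Bernoulli estimate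
  have hcube : (1 - β / (m * A)) ^ (1 - τ)
      ≤ 1 - (1 - τ) * (β / (m * A)) - (1 - τ) * τ / 2 * (β / (m * A)) ^ 2 := by
    have := bern_cubic (α := 1 - τ) (x := β / (m * A)) (by linarith) (by linarith) hx0 hx1
    calc (1 - β / (m * A)) ^ (1 - τ)
        ≤ 1 - (1 - τ) * (β / (m * A)) - (1 - τ) * (1 - (1 - τ)) / 2 * (β / (m * A)) ^ 2 := this
      _ = 1 - (1 - τ) * (β / (m * A)) - (1 - τ) * τ / 2 * (β / (m * A)) ^ 2 := by ring
  have hkey : lam * m ^ (1 - τ) = m ^ 2 / τ := by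
    have h6 : m ^ (τ + 1) = lam * τ := by
      rw [hm_def, ← Real.rpow_mul (mul_pos hlam hτ0).le]
      rw [one_div, inv_mul_cancel₀ (by linarith : τ + 1 ≠ 0), Real.rpow_one]
    have h7 : m ^ (1 - τ) * m ^ (τ + 1) = m ^ 2 := by
      rw [← Real.rpow_add hm, show (1 - τ + (τ + 1)) = (2:ℝ) from by ring]
      exact Real.rpow_two m
    rw [eq_div_iff hτ0.ne']
    calc lam * m ^ (1 - τ) * τ = m ^ (1 - τ) * (lam * τ) := by ring
      _ = m ^ (1 - τ) * m ^ (τ + 1) := by rw [h6]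
      _ = m ^ 2 := h7
  have hfinal : r ^ (m - 2) * A ^ (β - 2) *
        (m * (m - 1) * A ^ 2 - β * (2 * m - 1) * A + β * (β - 1))
      + (1 - 2 * ρ) * (r ^ (m - 2) * (A ^ (β - 2) * A) * (m * A - β))
      + lam * m ^ (1 - τ) * (r ^ (m - 2) * (A ^ (β - 2) * A ^ 2) *
          (1 - (1 - τ) * (β / (m * A)) - (1 - τ) * τ / 2 * (β / (m * A)) ^ 2)) = 0 := by
    rw [hkey, hρ]
    unfold Upsilon
    rw [← hm_def, hβ_def]
    field_simp
    ring
  refine le_trans ?_ (le_of_eq hfinal)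
  gcongr

end
end

section
/- Assume λ > 0, τ ∈ (0,1) and ρ = Υ = ((τ+1)/(2τ))(λτ)^{1/(τ+1)}, and set ϖ1 = −(λτ)^{1/(τ+1)}. Define Ψ̃(r) = r^{−ϖ1}(log r)^{2/(1+τ)} + r^{−ϖ1} log r for r > 1. Then there exists R₁ > 1 such that L_{ρ,λ,τ}[Ψ̃](r) ≤ 0 for every r > R₁. -/
open MeasureTheory Filter Topology Real RealInnerProductSpace

noncomputable section

section aux
open Real Set Filter in
section

private lemma hd_one_add_rpow (p x : ℝ) (hx : 0 ≤ x) :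
    HasDerivAt (fun y : ℝ => (1 + y) ^ p) (p * (1 + x) ^ (p - 1)) x := by
  have h1 : (1 : ℝ) + x ≠ 0 := by positivity
  have := (Real.hasDerivAt_rpow_const (x := 1 + x) (p := p) (Or.inl h1)).comp x
    ((hasDerivAt_id x).const_add 1)
  simpa [Function.comp_def] using this

private lemma nonneg_of_hasDerivAt (f f' : ℝ → ℝ)
    (hd : ∀ x, 0 ≤ x → HasDerivAt f (f' x) x)
    (h0 : f 0 = 0) (hf' : ∀ x, 0 ≤ x → 0 ≤ f' x) :
    ∀ x, 0 ≤ x → 0 ≤ f x := by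
  intro x hx
  have hmono : MonotoneOn f (Ici (0 : ℝ)) := by
    apply monotoneOn_of_deriv_nonneg (convex_Ici 0)
    · exact fun y hy => (hd y hy).continuousAt.continuousWithinAt
    · intro y hy
      rw [interior_Ici] at hy
      exact (hd y hy.le).differentiableAt.differentiableWithinAt
    · intro y hy
      rw [interior_Ici] at hy
      rw [(hd y hy.le).deriv]
      exact hf' y hy.le
  have := hmono (self_mem_Ici) hx hx
  rwa [h0] at this

private lemma cubic_bound (τ : ℝ) (hτ0 : 0 < τ) (hτ1 : τ < 1) :
    ∀ x : ℝ, 0 ≤ x →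
      (1 + x) ^ (1 - τ) ≤
        1 + (1 - τ) * x - τ * (1 - τ) / 2 * x ^ 2 + τ * (1 - τ) * (1 + τ) / 6 * x ^ 3 := by
  set K : ℝ := τ * (1 - τ) * (1 + τ) / 6 with hK
  -- h2 ≥ 0
  have h2 : ∀ x : ℝ, 0 ≤ x →
      0 ≤ τ * (1 - τ) * (1 + x) ^ (-τ - 1) - τ * (1 - τ) + 6 * K * x := by
    apply nonneg_of_hasDerivAt _
      (fun x => τ * (1 - τ) * ((-τ - 1) * (1 + x) ^ (-τ - 1 - 1)) + 6 * K)
    · intro x hx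
      have h := (((hd_one_add_rpow (-τ - 1) x hx).const_mul
        (τ * (1 - τ))).sub_const (τ * (1 - τ))).add ((hasDerivAt_id x).const_mul (6 * K))
      refine h.congr_deriv ?_
      ring
    · norm_num
    · intro x hx
      have hle : (1 + x) ^ (-τ - 1 - 1) ≤ 1 :=
        Real.rpow_le_one_of_one_le_of_nonpos (by linarith) (by linarith)
      have hpos : (0:ℝ) ≤ τ * (1 - τ) * (1 + τ) := by
        have : (0:ℝ) ≤ 1 - τ := by linarith
        have : (0:ℝ) ≤ 1 + τ := by linarith
        positivity
      rw [hK]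
      linarith [mul_nonneg hpos (by linarith : (0:ℝ) ≤ 1 - (1 + x) ^ (-τ - 1 - 1))]
  -- h1 ≥ 0
  have h1 : ∀ x : ℝ, 0 ≤ x →
      0 ≤ (1 - τ) - (1 - τ) * (1 + x) ^ (-τ) - τ * (1 - τ) * x + 3 * K * x ^ 2 := by
    apply nonneg_of_hasDerivAt _
      (fun x => τ * (1 - τ) * (1 + x) ^ (-τ - 1) - τ * (1 - τ) + 6 * K * x)
    · intro x hx
      have h := (((hasDerivAt_const x (1 - τ)).sub
          ((hd_one_add_rpow (-τ) x hx).const_mul (1 - τ))).sub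
          ((hasDerivAt_id x).const_mul (τ * (1 - τ)))).add
          ((hasDerivAt_pow 2 x).const_mul (3 * K))
      refine h.congr_deriv ?_
      push_cast
      ring
    · norm_num
    · exact h2
  -- h0 ≥ 0
  have h0 : ∀ x : ℝ, 0 ≤ x →
      0 ≤ 1 + (1 - τ) * x - τ * (1 - τ) / 2 * x ^ 2 + K * x ^ 3 - (1 + x) ^ (1 - τ) := by
    apply nonneg_of_hasDerivAt _
      (fun x => (1 - τ) - (1 - τ) * (1 + x) ^ (-τ) - τ * (1 - τ) * x + 3 * K * x ^ 2)
    · intro x hx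
      have h := (((((hasDerivAt_id x).const_mul (1 - τ)).const_add 1).sub
          ((hasDerivAt_pow 2 x).const_mul (τ * (1 - τ) / 2))).add
          ((hasDerivAt_pow 3 x).const_mul K)).sub (hd_one_add_rpow (1 - τ) x hx)
      refine h.congr_deriv ?_
      rw [show (1:ℝ) - τ - 1 = -τ from by ring]
      push_cast
      ring
    · norm_num
    · exact h1
  intro x hx
  have := h0 x hx
  linarith


-- first derivative
private lemma hasDerivP (m β s : ℝ) (hs : 1 < s) :
    HasDerivAt (fun y : ℝ => y ^ m * (Real.log y) ^ β + y ^ m * Real.log y)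
      (s ^ (m - 1) * (m * ((Real.log s) ^ β + Real.log s) + β * (Real.log s) ^ (β - 1) + 1)) s := by
  have hs0 : (0:ℝ) < s := by linarith
  have hLpos : 0 < Real.log s := Real.log_pos hs
  have hpow : HasDerivAt (fun y : ℝ => y ^ m) (m * s ^ (m - 1)) s :=
    Real.hasDerivAt_rpow_const (Or.inl hs0.ne')
  have hlog : HasDerivAt Real.log s⁻¹ s := Real.hasDerivAt_log hs0.ne'
  have hlogb : HasDerivAt (fun y : ℝ => (Real.log y) ^ β)
      (β * (Real.log s) ^ (β - 1) * s⁻¹) s := by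
    have := (Real.hasDerivAt_rpow_const (x := Real.log s) (p := β)
      (Or.inl hLpos.ne')).comp s hlog
    simpa [Function.comp_def, mul_comm, mul_assoc] using this
  have h := (hpow.mul hlogb).add (hpow.mul hlog)
  refine h.congr_deriv ?_
  have key : s ^ (m - 1) = s ^ m * s⁻¹ := by
    rw [Real.rpow_sub hs0, Real.rpow_one, div_eq_mul_inv]
  rw [key]
  ring

-- second derivative (derivative of the explicit first derivative)
private lemma hasDerivQ (m β s : ℝ) (hs : 1 < s) :
    HasDerivAt (fun y : ℝ => y ^ (m - 1) *
        (m * ((Real.log y) ^ β + Real.log y) + β * (Real.log y) ^ (β - 1) + 1))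
      (s ^ (m - 2) * ((m - 1) * (m * ((Real.log s) ^ β + Real.log s)
          + β * (Real.log s) ^ (β - 1) + 1)
        + (m * (β * (Real.log s) ^ (β - 1) + 1)
          + β * (β - 1) * (Real.log s) ^ (β - 2)))) s := by
  have hs0 : (0:ℝ) < s := by linarith
  have hLpos : 0 < Real.log s := Real.log_pos hs
  have hpow : HasDerivAt (fun y : ℝ => y ^ (m - 1)) ((m - 1) * s ^ (m - 1 - 1)) s :=
    Real.hasDerivAt_rpow_const (Or.inl hs0.ne')
  have hlog : HasDerivAt Real.log s⁻¹ s := Real.hasDerivAt_log hs0.ne'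
  have hlogb : HasDerivAt (fun y : ℝ => (Real.log y) ^ β)
      (β * (Real.log s) ^ (β - 1) * s⁻¹) s := by
    have := (Real.hasDerivAt_rpow_const (x := Real.log s) (p := β)
      (Or.inl hLpos.ne')).comp s hlog
    simpa [Function.comp_def, mul_comm, mul_assoc] using this
  have hlogb1 : HasDerivAt (fun y : ℝ => (Real.log y) ^ (β - 1))
      ((β - 1) * (Real.log s) ^ (β - 1 - 1) * s⁻¹) s := by
    have := (Real.hasDerivAt_rpow_const (x := Real.log s) (p := β - 1)
      (Or.inl hLpos.ne')).comp s hlog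
    simpa [Function.comp_def, mul_comm, mul_assoc] using this
  have hA : HasDerivAt (fun y : ℝ =>
      m * ((Real.log y) ^ β + Real.log y) + β * (Real.log y) ^ (β - 1) + 1)
      (m * (β * (Real.log s) ^ (β - 1) * s⁻¹ + s⁻¹)
        + β * ((β - 1) * (Real.log s) ^ (β - 1 - 1) * s⁻¹)) s := by
    have := (((hlogb.add hlog).const_mul m).add (hlogb1.const_mul β)).add_const 1
    exact this
  have h := hpow.mul hA
  refine h.congr_deriv ?_
  have key : s ^ (m - 1 - 1) = s ^ (m - 1) * s⁻¹ := by
    rw [show m - 1 - 1 = (m - 1) - 1 from rfl, Real.rpow_sub hs0, Real.rpow_one, div_eq_mul_inv]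
  have key2 : s ^ (m - 2) = s ^ (m - 1) * s⁻¹ := by
    rw [show m - 2 = (m - 1) - 1 by ring, Real.rpow_sub hs0, Real.rpow_one, div_eq_mul_inv]
  rw [key, key2, show β - 2 = β - 1 - 1 by ring]
  ring

end
end aux

set_option maxHeartbeats 1000000 in
/-- For `λ > 0`, `τ ∈ (0,1)`, `ρ = Υ` and `ϖ₁ = -(λτ)^{1/(τ+1)}`, the
function `Ψ̃(r) = r^{-ϖ₁} (log r)^{2/(1+τ)} + r^{-ϖ₁} log r` satisfies, for some `R₁ > 1`,
`L_{ρ,λ,τ}[Ψ̃](r) ≤ 0` for every `r > R₁`. -/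
theorem stmt19_Psi_supersolution
    (lam τ ρ : ℝ) (hlam : 0 < lam) (hτ0 : 0 < τ) (hτ1 : τ < 1)
    (hρ : ρ = Upsilon lam τ)
    (w1 : ℝ) (hw1 : w1 = -((lam * τ) ^ (1 / (τ + 1)))) :
    ∃ R1 : ℝ, 1 < R1 ∧
      ∀ r : ℝ, R1 < r →
        Lrad ρ lam τ
          (fun s : ℝ => s ^ (-w1) * (Real.log s) ^ (2 / (1 + τ)) + s ^ (-w1) * Real.log s)
          r ≤ 0 := by
  subst hρ hw1
  simp only [neg_neg]
  set m : ℝ := (lam * τ) ^ (1 / (τ + 1)) with hm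
  set β : ℝ := 2 / (1 + τ) with hβ
  clear_value m β
  have hτ1p : (0:ℝ) < 1 + τ := by linarith
  have hτm : (0:ℝ) < 1 - τ := by linarith
  have hlτ : (0:ℝ) < lam * τ := by positivity
  have hm0 : 0 < m := by rw [hm]; exact Real.rpow_pos_of_pos hlτ _
  have hβ1 : 1 < β := by rw [hβ, lt_div_iff₀ hτ1p]; linarith
  have hβ2 : β < 2 := by rw [hβ, div_lt_iff₀ hτ1p]; linarith
  have hβ0 : 0 < β := by linarith
  -- key power identities
  have hmτ1 : m ^ (τ + 1) = lam * τ := by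
    rw [hm, ← Real.rpow_mul hlτ.le, one_div,
      inv_mul_cancel₀ (by positivity : τ + 1 ≠ 0), Real.rpow_one]
  have hkey : lam * m ^ (1 - τ) = m ^ 2 / τ := by
    have h2 : m ^ (τ + 1) * m ^ (1 - τ) = m ^ 2 := by
      rw [← Real.rpow_add hm0, show τ + 1 + (1 - τ) = ((2:ℕ):ℝ) by push_cast; ring,
        Real.rpow_natCast]
    rw [eq_div_iff hτ0.ne']
    calc lam * m ^ (1 - τ) * τ = m ^ (τ + 1) * m ^ (1 - τ) := by rw [hmτ1]; ring
    _ = m ^ 2 := h2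
  have hU : Upsilon lam τ = (τ + 1) / (2 * τ) * m := by rw [Upsilon, hm]
  set K : ℝ := τ * (1 - τ) * (1 + τ) / 6 with hKdef
  set c1 : ℝ := K / (τ * m) * (β + 1) ^ 3 with hc1
  set c2 : ℝ := (1 - τ) / 4 * β * (2 - β) with hc2
  clear_value K c1 c2
  have hKnn : 0 ≤ K := by
    rw [hKdef]
    have := mul_nonneg (mul_nonneg hτ0.le hτm.le) hτ1p.le
    linarith
  have hKm : 0 ≤ K / (τ * m) := div_nonneg hKnn (mul_pos hτ0 hm0).le
  have hc2pos : 0 < c2 := by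
    rw [hc2]
    exact mul_pos (mul_pos (by linarith) hβ0) (by linarith)
  have hc1nonneg : 0 ≤ c1 := by
    rw [hc1]
    exact mul_nonneg hKm (pow_nonneg (by linarith) 3)
  -- choose L0
  have htend : Tendsto (fun L : ℝ => c1 * L ^ (β - 2)) atTop (𝓝 0) := by
    have h := (tendsto_rpow_neg_atTop (y := 2 - β) (by linarith)).const_mul c1
    simp only [mul_zero] at h
    convert h using 2 with L
    ring_nf
  have hev : ∀ᶠ L : ℝ in atTop, c1 * L ^ (β - 2) < c2 :=
    htend.eventually (gt_mem_nhds hc2pos)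
  obtain ⟨L0, hL0⟩ := (hev.and (eventually_ge_atTop (1:ℝ))).exists_forall_of_atTop
  refine ⟨max (Real.exp L0) 2, lt_of_lt_of_le one_lt_two (le_max_right _ _), ?_⟩
  intro r hr
  have hr2 : (2:ℝ) < r := lt_of_le_of_lt (le_max_right _ _) hr
  have hr1 : (1:ℝ) < r := by linarith
  have hr0 : (0:ℝ) < r := by linarith
  set L : ℝ := Real.log r with hLdef
  clear_value L
  have hrL0 : Real.exp L0 < r := lt_of_le_of_lt (le_max_left _ _) hr
  have hLgeL0 : L0 ≤ L := by
    rw [hLdef]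
    have := Real.log_lt_log (Real.exp_pos L0) hrL0
    rw [Real.log_exp] at this
    linarith
  obtain ⟨hLsmall, hL1⟩ := hL0 L hLgeL0
  have hLpos : (0:ℝ) < L := by linarith
  have hLβpos : (0:ℝ) < L ^ β := Real.rpow_pos_of_pos hLpos _
  have hLb1pos : (0:ℝ) < L ^ (β - 1) := Real.rpow_pos_of_pos hLpos _
  have hLb2pos : (0:ℝ) < L ^ (β - 2) := Real.rpow_pos_of_pos hLpos _
  -- abbreviations
  set B : ℝ := L ^ β + L with hBdef
  set C : ℝ := β * L ^ (β - 1) + 1 with hCdef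
  set D : ℝ := β * (β - 1) * L ^ (β - 2) with hDdef
  set A : ℝ := m * (L ^ β + L) + β * L ^ (β - 1) + 1 with hAdef
  clear_value B C D A
  have hBpos : 0 < B := by rw [hBdef]; linarith
  have hCpos : 0 < C := by
    rw [hCdef]
    have := mul_pos hβ0 hLb1pos
    linarith
  have hDpos : 0 < D := by
    rw [hDdef]
    exact mul_pos (mul_pos hβ0 (by linarith)) hLb2pos
  have hApos : 0 < A := by
    rw [hAdef]
    have h1 := mul_pos hm0 (show (0:ℝ) < L ^ β + L by linarith)
    have h2 := mul_pos hβ0 hLb1pos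
    linarith
  have hAeq : A = m * B + C := by rw [hAdef, hBdef, hCdef]; ring
  -- derivatives
  have hP' := hasDerivP m β r hr1
  have hQ' := hasDerivQ m β r hr1
  have hd1 : deriv (fun s : ℝ => s ^ m * Real.log s ^ β + s ^ m * Real.log s) r
      = r ^ (m - 1) * A := by
    rw [hP'.deriv, hAdef, hLdef]
  have hd2 : deriv (deriv (fun s : ℝ => s ^ m * Real.log s ^ β + s ^ m * Real.log s)) r
      = r ^ (m - 2) * ((m - 1) * A + (m * C + D)) := by
    have hEq : deriv (fun s : ℝ => s ^ m * Real.log s ^ β + s ^ m * Real.log s)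
        =ᶠ[𝓝 r] fun y : ℝ => y ^ (m - 1) *
          (m * ((Real.log y) ^ β + Real.log y) + β * (Real.log y) ^ (β - 1) + 1) := by
      filter_upwards [Ioi_mem_nhds hr1] with s hs
      exact (hasDerivP m β s hs).deriv
    rw [hEq.deriv_eq, hQ'.deriv, hAdef, hCdef, hDdef, hLdef]
  -- value of P
  have hPval : r ^ m * Real.log r ^ β + r ^ m * Real.log r = r ^ m * B := by
    rw [hBdef, hLdef]; ring
  -- assemble Lrad
  rw [Lrad, hd1, hd2, hPval]
  have hrm1pos : (0:ℝ) < r ^ (m - 1) := Real.rpow_pos_of_pos hr0 _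
  have hrm2pos : (0:ℝ) < r ^ (m - 2) := Real.rpow_pos_of_pos hr0 _
  have hrmpos : (0:ℝ) < r ^ m := Real.rpow_pos_of_pos hr0 _
  have habs : |r ^ (m - 1) * A| = r ^ (m - 1) * A := abs_of_pos (mul_pos hrm1pos hApos)
  rw [habs]
  -- rewrite the three terms as r^(m-2) * (...)
  have hterm2 : (1 - 2 * Upsilon lam τ) * (r ^ (m - 1) * A) / r
      = r ^ (m - 2) * ((1 - 2 * ((τ + 1) / (2 * τ) * m)) * A) := by
    rw [hU]
    have hstep : r ^ (m - 1) = r ^ (m - 2) * r := by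
      rw [← Real.rpow_add_one hr0.ne']; ring_nf
    rw [hstep]
    field_simp
  have hterm3 : lam * (r ^ m * B) ^ τ * (r ^ (m - 1) * A) ^ (1 - τ) / r ^ (1 + τ)
      = r ^ (m - 2) * (lam * B ^ τ * A ^ (1 - τ)) := by
    rw [Real.mul_rpow hrmpos.le hBpos.le, Real.mul_rpow hrm1pos.le hApos.le,
      ← Real.rpow_mul hr0.le, ← Real.rpow_mul hr0.le]
    rw [show lam * (r ^ (m * τ) * B ^ τ) * (r ^ ((m - 1) * (1 - τ)) * A ^ (1 - τ)) / r ^ (1 + τ)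
        = r ^ (m * τ) * r ^ ((m - 1) * (1 - τ)) / r ^ (1 + τ) * (lam * B ^ τ * A ^ (1 - τ))
        from by ring]
    rw [← Real.rpow_add hr0, ← Real.rpow_sub hr0]
    rw [show m * τ + (m - 1) * (1 - τ) - (1 + τ) = m - 2 by ring]
  rw [hterm2, hterm3]
  rw [show r ^ (m - 2) * ((m - 1) * A + (m * C + D))
      + r ^ (m - 2) * ((1 - 2 * ((τ + 1) / (2 * τ) * m)) * A)
      + r ^ (m - 2) * (lam * B ^ τ * A ^ (1 - τ))
      = r ^ (m - 2) * (((m - 1) * A + (m * C + D))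
        + (1 - 2 * ((τ + 1) / (2 * τ) * m)) * A + lam * B ^ τ * A ^ (1 - τ)) from by ring]
  apply mul_nonpos_of_nonneg_of_nonpos hrm2pos.le
  -- now the scalar inequality F ≤ 0
  set x : ℝ := C / (m * B) with hxdef
  clear_value x
  have hx0 : 0 ≤ x := by rw [hxdef]; exact (div_pos hCpos (mul_pos hm0 hBpos)).le
  have hAx : A = m * B * (1 + x) := by
    rw [hAeq, hxdef]; field_simp
  -- bound the nonlinear term
  have hnl : lam * B ^ τ * A ^ (1 - τ)
      ≤ m ^ 2 / τ * B + (1 - τ) * (m / τ) * C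
        - (1 - τ) / 2 * (C ^ 2 / B) + K / (τ * m) * (C ^ 3 / B ^ 2) := by
    have h1 : A ^ (1 - τ) = (m * B) ^ (1 - τ) * (1 + x) ^ (1 - τ) := by
      rw [hAx, Real.mul_rpow (mul_pos hm0 hBpos).le (by linarith)]
    have h2 : lam * B ^ τ * A ^ (1 - τ) = m ^ 2 / τ * B * (1 + x) ^ (1 - τ) := by
      rw [h1, Real.mul_rpow hm0.le hBpos.le]
      rw [show lam * B ^ τ * (m ^ (1 - τ) * B ^ (1 - τ) * (1 + x) ^ (1 - τ))
          = (lam * m ^ (1 - τ)) * (B ^ τ * B ^ (1 - τ)) * (1 + x) ^ (1 - τ) from by ring]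
      rw [← Real.rpow_add hBpos, show τ + (1 - τ) = 1 by ring, Real.rpow_one, hkey]
    rw [h2]
    have hcb := cubic_bound τ hτ0 hτ1 x hx0
    have hfac : (0:ℝ) ≤ m ^ 2 / τ * B :=
      mul_nonneg (div_nonneg (by positivity) hτ0.le) hBpos.le
    have hmul := mul_le_mul_of_nonneg_left hcb hfac
    calc m ^ 2 / τ * B * (1 + x) ^ (1 - τ)
        ≤ m ^ 2 / τ * B * (1 + (1 - τ) * x - τ * (1 - τ) / 2 * x ^ 2
            + τ * (1 - τ) * (1 + τ) / 6 * x ^ 3) := hmul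
      _ = m ^ 2 / τ * B + (1 - τ) * (m / τ) * C
            - (1 - τ) / 2 * (C ^ 2 / B) + K / (τ * m) * (C ^ 3 / B ^ 2) := by
          rw [hxdef, hKdef]
          field_simp
  -- linear cancellation
  have hlin : (m - 1) * A + m * C + (1 - 2 * ((τ + 1) / (2 * τ) * m)) * A
      + (m ^ 2 / τ * B + (1 - τ) * (m / τ) * C) = 0 := by
    rw [hAeq]
    field_simp
    ring
  -- final comparison
  have hfinal : D + K / (τ * m) * (C ^ 3 / B ^ 2) ≤ (1 - τ) / 2 * (C ^ 2 / B) := by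
    -- rpow arithmetic facts
    have e1 : L ^ (β - 2) * L ^ β = L ^ (β - 1) * L ^ (β - 1) := by
      rw [← Real.rpow_add hLpos, ← Real.rpow_add hLpos]; ring_nf
    have e2 : L ^ (β - 2) * L = L ^ (β - 1) := by
      rw [← Real.rpow_add_one hLpos.ne']; ring_nf
    have hβτ : β * (1 + τ) = 2 := by rw [hβ]; field_simp
    have hβid : β * (β - 1) = (1 - τ) / 2 * β ^ 2 := by
      linear_combination (β / 2) * hβτ
    have hC2 : (1 - τ) / 2 * C ^ 2 - D * B
        = (1 - τ) / 2 * (β * (2 - β) * L ^ (β - 1) + 1) := by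
      rw [hCdef, hDdef, hBdef]
      linear_combination (-(β * (β - 1))) * e1 + (-(β * (β - 1))) * e2
        - (L ^ (β - 1) * L ^ (β - 1) + L ^ (β - 1)) * hβid
    have hBle : B ≤ 2 * L ^ β := by
      rw [hBdef]
      have : L ≤ L ^ β := by
        calc L = L ^ (1:ℝ) := (Real.rpow_one L).symm
        _ ≤ L ^ β := Real.rpow_le_rpow_of_exponent_le hL1 (by linarith)
      linarith
    have hnum : (0:ℝ) ≤ (1 - τ) / 2 * (β * (2 - β) * L ^ (β - 1)) :=
      mul_nonneg (by linarith)
        (mul_nonneg (mul_nonneg hβ0.le (by linarith)) hLb1pos.le)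
    have hgap : c2 * L ^ (-1:ℝ) ≤ (1 - τ) / 2 * (C ^ 2 / B) - D := by
      have step1 : (1 - τ) / 2 * (C ^ 2 / B) - D
          = ((1 - τ) / 2 * C ^ 2 - D * B) / B := by
        field_simp
      rw [step1, hC2]
      have step2 : (1 - τ) / 2 * (β * (2 - β) * L ^ (β - 1)) / (2 * L ^ β)
          ≤ (1 - τ) / 2 * (β * (2 - β) * L ^ (β - 1) + 1) / B := by
        apply div_le_div₀ (by linarith) (by linarith) hBpos hBle
      have step3 : (1 - τ) / 2 * (β * (2 - β) * L ^ (β - 1)) / (2 * L ^ β)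
          = c2 * L ^ (-1:ℝ) := by
        have eL : L ^ (β - 1) = L ^ β * L ^ (-1:ℝ) := by
          rw [← Real.rpow_add hLpos]; ring_nf
        rw [hc2, eL]
        field_simp
        ring
      linarith [step2, step3.symm.le]
    have hLinvpos : (0:ℝ) < L ^ (-1:ℝ) := Real.rpow_pos_of_pos hLpos _
    have hcube : K / (τ * m) * (C ^ 3 / B ^ 2) ≤ c2 * L ^ (-1:ℝ) := by
      have h1u : (1:ℝ) ≤ L ^ (β - 1) :=
        Real.one_le_rpow hL1 (by linarith)
      have hCle : C ≤ (β + 1) * L ^ (β - 1) := by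
        rw [hCdef, show (β + 1) * L ^ (β - 1) = β * L ^ (β - 1) + L ^ (β - 1) from by ring]
        linarith
      have hC3 : C ^ 3 ≤ ((β + 1) * L ^ (β - 1)) ^ 3 :=
        pow_le_pow_left₀ hCpos.le hCle 3
      have hB2 : (L ^ β) ^ 2 ≤ B ^ 2 := by
        have hLB : L ^ β ≤ B := by rw [hBdef]; linarith
        exact pow_le_pow_left₀ hLβpos.le hLB 2
      have hq : K / (τ * m) * (C ^ 3 / B ^ 2)
          ≤ K / (τ * m) * (((β + 1) * L ^ (β - 1)) ^ 3 / (L ^ β) ^ 2) := by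
        apply mul_le_mul_of_nonneg_left _ hKm
        apply div_le_div₀ (pow_nonneg (le_trans hCpos.le hCle) 3) hC3
          (by positivity) hB2
      have hid : ((β + 1) * L ^ (β - 1)) ^ 3 / (L ^ β) ^ 2
          = (β + 1) ^ 3 * (L ^ (β - 2) * L ^ (-1:ℝ)) := by
        have e3 : (L ^ (β - 1)) ^ (3:ℕ) = L ^ ((β - 1) * 3) := by
          rw [← Real.rpow_natCast (L ^ (β - 1)) 3, ← Real.rpow_mul hLpos.le]
          norm_num
        have e4 : (L ^ β) ^ (2:ℕ) = L ^ (β * 2) := by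
          rw [← Real.rpow_natCast (L ^ β) 2, ← Real.rpow_mul hLpos.le]
          norm_num
        rw [mul_pow, e3, e4, ← Real.rpow_add hLpos,
          show β - 2 + -1 = (β - 1) * 3 - β * 2 by ring, Real.rpow_sub hLpos]
        ring
      calc K / (τ * m) * (C ^ 3 / B ^ 2)
          ≤ K / (τ * m) * (((β + 1) * L ^ (β - 1)) ^ 3 / (L ^ β) ^ 2) := hq
        _ = c1 * L ^ (β - 2) * L ^ (-1:ℝ) := by rw [hid, hc1]; ring
        _ ≤ c2 * L ^ (-1:ℝ) := mul_le_mul_of_nonneg_right hLsmall.le hLinvpos.le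
    linarith
  linarith [hnl, hlin, hfinal]

end
end
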